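/- For all natural numbers n, m, j: S_{s,q}[n+1, m+j+1] = Σ_{k=m}^{n} Σ_{r=0}^{n−k} S_{s,q}[k,m] · q^{(j+1)(k+(k−m)(s−1)) + j} · binom(r, j)_{q^{s−1}} · S_{s,q}[n−k, r] · Π_{t=0}^{r−j−1} [(k−m)(s−1) + k + 1 + t·(s−1)]_q (the outer sum being empty, hence 0, when m > n). -/
import Mathlib


/-- The `q`-bracket `[t]_q = (q^t - 1)/(q - 1)` (real exponentiation). -/
noncomputable def qBracket (q t : ℝ) : ℝ := (q ^ t - 1) / (q - 1)

open Classical in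
/-- The `Q`-binomial coefficient: the sum of `Q^(t₁+⋯+t_{n-k})` over all weakly
increasing integer tuples `0 ≤ t₁ ≤ ⋯ ≤ t_{n-k} ≤ k` when `k ≤ n`, and `0` when `k > n`. -/
noncomputable def qBinom (Q : ℝ) (n k : ℕ) : ℝ :=
  if k ≤ n then
    ∑ f ∈ Finset.univ.filter (fun f : Fin (n - k) → Fin (k + 1) => Monotone f),
      Q ^ (∑ i, (f i : ℕ))
  else 0

/-- The generalized `q`-Stirling numbers `S_{s,q}[n,k]` of Goldman–Haglund type. -/
noncomputable def genStirling (s q : ℝ) : ℕ → ℕ → ℝ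
  | 0, 0 => 1
  | 0, _ + 1 => 0
  | _ + 1, 0 => 0
  | n + 1, k + 1 =>
    if k + 1 ≤ n + 1 then
      q ^ (s * (n : ℝ) - (s - 1) * (k : ℝ)) * genStirling s q n k
        + qBracket q (s * (n : ℝ) - (s - 1) * ((k : ℝ) + 1)) * genStirling s q n (k + 1)
    else 0

section Aux

lemma qBracket_zero (q : ℝ) : qBracket q 0 = 0 := by simp [qBracket]

lemma qBracket_add {q : ℝ} (hq : 0 < q) (hq1 : q ≠ 1) (x y : ℝ) :
    qBracket q (x + y) = qBracket q x + q ^ x * qBracket q y := by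
  have h : q - 1 ≠ 0 := sub_ne_zero.mpr hq1
  unfold qBracket
  rw [Real.rpow_add hq]
  field_simp
  ring

lemma genStirling_eq_zero (s q : ℝ) : ∀ n k, n < k → genStirling s q n k = 0 := by
  intro n
  induction n with
  | zero => intro k hk; obtain ⟨k', rfl⟩ := Nat.exists_eq_add_of_lt hk; simp [genStirling]
  | succ n ih =>
    intro k hk
    match k, hk with
    | k' + 1, hk => rw [genStirling, if_neg (by omega)]

lemma genStirling_succ_zero (s q : ℝ) (n : ℕ) : genStirling s q (n + 1) 0 = 0 := by
  rw [genStirling]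

lemma genStirling_succ (s q : ℝ) (n k : ℕ) :
    genStirling s q (n + 1) (k + 1)
    = q ^ (s * (n : ℝ) - (s - 1) * (k : ℝ)) * genStirling s q n k
        + qBracket q (s * (n : ℝ) - (s - 1) * ((k : ℝ) + 1)) * genStirling s q n (k + 1) := by
  rw [genStirling]
  split
  · rfl
  · rw [genStirling_eq_zero s q n k (by omega), genStirling_eq_zero s q n (k + 1) (by omega)]
    ring

lemma qBinom_eq_zero (Q : ℝ) {n k : ℕ} (h : n < k) : qBinom Q n k = 0 := by
  rw [qBinom, if_neg (by omega)]

open Classical in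
lemma qBinom_eq (Q : ℝ) (n k : ℕ) (h : k ≤ n) (d : ℕ) (hd : n - k = d) :
    qBinom Q n k = ∑ f ∈ Finset.univ.filter (fun f : Fin d → Fin (k + 1) => Monotone f),
      Q ^ (∑ i, (f i : ℕ)) := by
  subst hd; rw [qBinom, if_pos h]

lemma qBinom_self (Q : ℝ) (n : ℕ) : qBinom Q n n = 1 := by
  rw [qBinom_eq Q n n le_rfl 0 (Nat.sub_self n)]
  have hmono : ∀ f ∈ (Finset.univ : Finset (Fin 0 → Fin (n + 1))), Monotone f :=
    fun f _ => fun a => a.elim0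
  rw [Finset.filter_true_of_mem hmono, Finset.univ_unique, Finset.sum_singleton]
  simp

lemma qBinom_zero (Q : ℝ) (n : ℕ) : qBinom Q n 0 = 1 := by
  rw [qBinom, if_pos (Nat.zero_le n)]
  have hmono : ∀ f ∈ (Finset.univ : Finset (Fin (n - 0) → Fin 1)), Monotone f :=
    fun f _ => fun a b _ => le_of_eq (Subsingleton.elim _ _)
  rw [Finset.filter_true_of_mem hmono, Finset.univ_unique, Finset.sum_singleton]
  have hv : ∀ i : Fin (n - 0), ((default : Fin (n - 0) → Fin 1) i : ℕ) = 0 := by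
    intro i; simp [Subsingleton.elim ((default : Fin (n - 0) → Fin 1) i) 0]
  rw [Finset.sum_congr rfl (fun i _ => hv i)]
  simp

lemma qBinom_pascal (Q : ℝ) (r j : ℕ) :
    qBinom Q (r + 1) (j + 1) = Q ^ (r - j) * qBinom Q r j + qBinom Q r (j + 1) := by
  rcases lt_trichotomy r j with hlt | rfl | hgt
  · rw [qBinom_eq_zero Q (by omega : r + 1 < j + 1), qBinom_eq_zero Q hlt,
      qBinom_eq_zero Q (by omega : r < j + 1)]
    ring
  · rw [qBinom_self, qBinom_self, qBinom_eq_zero Q (by omega : r < r + 1),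
      Nat.sub_self]
    ring
  · obtain ⟨d, rfl⟩ : ∃ d, r = j + d + 1 := ⟨r - j - 1, by omega⟩
    rw [qBinom_eq Q (j + d + 2) (j + 1) (by omega) (d + 1) (by omega),
      qBinom_eq Q (j + d + 1) (j + 1) (by omega) d (by omega),
      qBinom_eq Q (j + d + 1) j (by omega) (d + 1) (by omega),
      (by omega : j + d + 1 - j = d + 1)]
    classical
    rw [← Finset.sum_filter_add_sum_filter_not
      (Finset.univ.filter (fun f : Fin (d + 1) → Fin (j + 2) => Monotone f))
      (fun f => f 0 = 0)]
    have hA : ∑ f ∈ (Finset.univ.filter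
          (fun f : Fin (d + 1) → Fin (j + 2) => Monotone f)).filter (fun f => f 0 = 0),
          Q ^ (∑ i, (f i : ℕ))
        = ∑ g ∈ Finset.univ.filter (fun g : Fin d → Fin (j + 2) => Monotone g),
          Q ^ (∑ i, (g i : ℕ)) := by
      apply Finset.sum_nbij' (fun f => f ∘ Fin.succ)
        (fun g => fun i => Fin.cases 0 g i)
      · intro f hf
        simp only [Finset.mem_filter, Finset.mem_univ, true_and] at hf ⊢
        exact fun a b hab => hf.1 (Fin.succ_le_succ_iff.mpr hab)
      · intro g hg
        simp only [Finset.mem_filter, Finset.mem_univ, true_and] at hg ⊢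
        constructor
        · intro a b hab
          induction a using Fin.cases with
          | zero =>
            induction b using Fin.cases with
            | zero => exact le_rfl
            | succ b' => simp [Fin.zero_le]
          | succ a' =>
            induction b using Fin.cases with
            | zero => exact absurd hab (by simp [Fin.le_zero_iff, Fin.succ_ne_zero])
            | succ b' =>
              simp only [Fin.cases_succ]
              exact hg (Fin.succ_le_succ_iff.mp hab)
        · simp
      · intro f hf
        simp only [Finset.mem_filter, Finset.mem_univ, true_and] at hf
        funext i
        induction i using Fin.cases with
        | zero => simp [hf.2]
        | succ i' => simp
      · intro g hg
        funext i
        simp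
      · intro f hf
        simp only [Finset.mem_filter, Finset.mem_univ, true_and] at hf
        rw [Fin.sum_univ_succ, hf.2]
        simp
    have hB : ∑ f ∈ (Finset.univ.filter
          (fun f : Fin (d + 1) → Fin (j + 2) => Monotone f)).filter (fun f => ¬ f 0 = 0),
          Q ^ (∑ i, (f i : ℕ))
        = Q ^ (d + 1) * ∑ g ∈ Finset.univ.filter (fun g : Fin (d + 1) → Fin (j + 1) => Monotone g),
          Q ^ (∑ i, (g i : ℕ)) := by
      rw [Finset.mul_sum]
      apply Finset.sum_nbij' (fun f => fun i => (⟨(f i : ℕ) - 1, by omega⟩ : Fin (j + 1)))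
        (fun g => fun i => (⟨(g i : ℕ) + 1, by omega⟩ : Fin (j + 2)))
      · intro f hf
        simp only [Finset.mem_filter, Finset.mem_univ, true_and] at hf ⊢
        intro a b hab
        simp only [Fin.mk_le_mk]
        exact Nat.sub_le_sub_right (hf.1 hab) 1
      · intro g hg
        simp only [Finset.mem_filter, Finset.mem_univ, true_and] at hg ⊢
        constructor
        · intro a b hab
          simp only [Fin.mk_le_mk, Nat.add_le_add_iff_right]
          exact hg hab
        · intro h
          have := congrArg Fin.val h
          simp at this
      · intro f hf
        simp only [Finset.mem_filter, Finset.mem_univ, true_and] at hf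
        have h1 : ∀ i, 1 ≤ (f i : ℕ) := by
          intro i
          have h0 : 1 ≤ (f 0 : ℕ) := by
            rcases Nat.eq_zero_or_pos (f 0 : ℕ) with h | h
            · exact absurd (Fin.ext h) hf.2
            · exact h
          exact le_trans h0 (hf.1 (Fin.zero_le i))
        funext i
        apply Fin.ext
        have := h1 i
        simp only [Fin.val_mk]
        omega
      · intro g hg
        funext i
        exact Fin.ext (by simp)
      · intro f hf
        simp only [Finset.mem_filter, Finset.mem_univ, true_and] at hf
        have h1 : ∀ i, 1 ≤ (f i : ℕ) := by
          intro i
          have h0 : 1 ≤ (f 0 : ℕ) := by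
            rcases Nat.eq_zero_or_pos (f 0 : ℕ) with h | h
            · exact absurd (Fin.ext h) hf.2
            · exact h
          exact le_trans h0 (hf.1 (Fin.zero_le i))
        rw [← pow_add]
        congr 1
        have hss : ∑ i, (f i : ℕ) = ∑ i : Fin (d + 1), (((f i : ℕ) - 1) + 1) := by
          apply Finset.sum_congr rfl
          intro i _
          have := h1 i
          omega
        rw [hss, Finset.sum_add_distrib]
        simp [add_comm]
    rw [hA, hB]
    ring

end Aux

section Main

/-- Abbreviation for the power-of-`q` weight in the convolution. -/
noncomputable def Wq (q s : ℝ) (m j k : ℕ) : ℝ :=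
  q ^ (((j : ℝ) + 1) * ((k : ℝ) + ((k : ℝ) - (m : ℝ)) * (s - 1)) + (j : ℝ))

/-- Abbreviation for the bracket product in the convolution. -/
noncomputable def Pq (q s : ℝ) (m k e : ℕ) : ℝ :=
  ∏ t ∈ Finset.range e,
    qBracket q (((k : ℝ) - (m : ℝ)) * (s - 1) + (k : ℝ) + 1 + (t : ℝ) * (s - 1))

/-- The summand of the convolution identity. -/
noncomputable def Tm (q s : ℝ) (m j n k r : ℕ) : ℝ :=
  genStirling s q k m * Wq q s m j k * qBinom (q ^ (s - 1)) r j *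
    genStirling s q (n - k) r * Pq q s m k (r - j)

noncomputable def T1 (q s : ℝ) (m j n k r : ℕ) : ℝ :=
  genStirling s q k m * Wq q s m j k * qBinom (q ^ (s - 1)) (r + 1) j *
    (q ^ (s * ((n - k : ℕ) : ℝ) - (s - 1) * (r : ℝ)) * genStirling s q (n - k) r) *
    Pq q s m k (r + 1 - j)

noncomputable def Gq (q s : ℝ) (m j n k r : ℕ) : ℝ :=
  genStirling s q k m * Wq q s m j k * qBinom (q ^ (s - 1)) r j *
    (qBracket q (s * ((n - k : ℕ) : ℝ) - (s - 1) * (r : ℝ)) * genStirling s q (n - k) r) *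
    Pq q s m k (r - j)

lemma Pq_zero (q s : ℝ) (m k : ℕ) : Pq q s m k 0 = 1 := by simp [Pq]

lemma sum_decomp (q s : ℝ) (n m j k : ℕ) (hk : k ≤ n) :
    ∑ r ∈ Finset.range ((n + 1) - k + 1), Tm q s m j (n + 1) k r
    = ∑ r ∈ Finset.range (n - k + 1), (T1 q s m j n k r + Gq q s m j n k r) := by
  have h1 : (n + 1) - k + 1 = (n - k + 1) + 1 := by omega
  rw [h1, Finset.sum_range_succ']
  have h0 : Tm q s m j (n + 1) k 0 = 0 := by
    simp only [Tm]
    rw [(by omega : (n + 1) - k = (n - k) + 1), genStirling_succ_zero]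
    ring
  rw [h0, add_zero]
  have hTm : ∀ r : ℕ, Tm q s m j (n + 1) k (r + 1)
      = T1 q s m j n k r + Gq q s m j n k (r + 1) := by
    intro r
    simp only [Tm, T1, Gq]
    rw [(by omega : (n + 1) - k = (n - k) + 1), genStirling_succ]
    rw [(by push_cast; ring : ((r + 1 : ℕ) : ℝ) = (r : ℝ) + 1)]
    ring
  rw [Finset.sum_congr rfl (fun r _ => hTm r), Finset.sum_add_distrib,
    Finset.sum_add_distrib]
  congr 1
  have hG0 : Gq q s m j n k 0 = 0 := by
    simp only [Gq]
    rcases Nat.lt_or_ge k n with h | h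
    · rw [(by omega : n - k = (n - k - 1) + 1), genStirling_succ_zero]; ring
    · rw [(by omega : n - k = 0),
        (by push_cast; ring : s * ((0 : ℕ) : ℝ) - (s - 1) * ((0 : ℕ) : ℝ) = 0),
        qBracket_zero]
      ring
  have hGtop : Gq q s m j n k (n - k + 1) = 0 := by
    simp only [Gq]
    rw [genStirling_eq_zero s q (n - k) (n - k + 1) (by omega)]
    ring
  have e1 := Finset.sum_range_succ' (fun r => Gq q s m j n k r) (n - k + 1)
  have e2 := Finset.sum_range_succ (fun r => Gq q s m j n k r) (n - k + 1)
  rw [hG0, add_zero] at e1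
  rw [hGtop, add_zero] at e2
  rw [← e1, e2]

lemma point_zero (q s : ℝ) (hq : 0 < q) (hq1 : q ≠ 1) (n m k r : ℕ) (hk : k ≤ n) :
    T1 q s m 0 n k r + Gq q s m 0 n k r
    = qBracket q (s * ((n : ℝ) + 1) - (s - 1) * ((m : ℝ) + 1)) * Tm q s m 0 n k r := by
  have hnk : ((n - k : ℕ) : ℝ) = (n : ℝ) - (k : ℝ) := Nat.cast_sub hk
  simp only [T1, Gq, Tm, Nat.sub_zero]
  have hP : Pq q s m k (r + 1) = Pq q s m k r *
      qBracket q (((k : ℝ) - (m : ℝ)) * (s - 1) + (k : ℝ) + 1 + (r : ℝ) * (s - 1)) := by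
    simp only [Pq]
    rw [Finset.prod_range_succ]
  have hbr : qBracket q (s * ((n : ℝ) + 1) - (s - 1) * ((m : ℝ) + 1))
      = qBracket q (s * ((n : ℝ) - (k : ℝ)) - (s - 1) * (r : ℝ))
        + q ^ (s * ((n : ℝ) - (k : ℝ)) - (s - 1) * (r : ℝ)) *
          qBracket q (((k : ℝ) - (m : ℝ)) * (s - 1) + (k : ℝ) + 1 + (r : ℝ) * (s - 1)) := by
    rw [← qBracket_add hq hq1]
    congr 1
    ring
  rw [hnk, hP, hbr]
  simp only [qBinom_zero]
  ring

lemma point_succ (q s : ℝ) (hq : 0 < q) (hq1 : q ≠ 1) (n m j k r : ℕ) (hk : k ≤ n) :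
    T1 q s m (j + 1) n k r + Gq q s m (j + 1) n k r
    = q ^ (s * ((n : ℝ) + 1) - (s - 1) * ((m : ℝ) + (j : ℝ) + 1)) * Tm q s m j n k r
      + qBracket q (s * ((n : ℝ) + 1) - (s - 1) * ((m : ℝ) + (j : ℝ) + 2)) *
        Tm q s m (j + 1) n k r := by
  have hnk : ((n - k : ℕ) : ℝ) = (n : ℝ) - (k : ℝ) := Nat.cast_sub hk
  rcases Nat.lt_or_ge r j with hr | hr
  · -- r < j : everything vanishes
    simp only [T1, Gq, Tm]
    rw [qBinom_pascal, qBinom_eq_zero (q ^ (s - 1)) hr,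
      qBinom_eq_zero (q ^ (s - 1)) (show r < j + 1 by omega)]
    ring
  · rcases Nat.lt_or_ge r (j + 1) with hr1 | hr1
    · -- r = j
      have hrj : r = j := by omega
      subst hrj
      simp only [T1, Gq, Tm]
      rw [qBinom_pascal, qBinom_eq_zero (q ^ (s - 1)) (show r < r + 1 by omega),
        Nat.succ_sub_succ, Nat.sub_self, Pq_zero]
      have hW : Wq q s m (r + 1) k * q ^ (s * ((n : ℝ) - (k : ℝ)) - (s - 1) * (r : ℝ))
          = q ^ (s * ((n : ℝ) + 1) - (s - 1) * ((m : ℝ) + (r : ℝ) + 1)) * Wq q s m r k := by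
        simp only [Wq]
        rw [← Real.rpow_add hq, ← Real.rpow_add hq]
        congr 1
        push_cast
        ring
      rw [hnk, pow_zero]
      linear_combination (genStirling s q k m * qBinom (q ^ (s - 1)) r r *
        genStirling s q (n - k) r) * hW
    · -- r ≥ j + 1
      have hc2 : ((r - j : ℕ) : ℝ) = (r : ℝ) - (j : ℝ) := Nat.cast_sub (by omega)
      simp only [T1, Gq, Tm]
      rw [qBinom_pascal, Nat.succ_sub_succ]
      have hQ : ((q ^ (s - 1) : ℝ)) ^ (r - j : ℕ) = q ^ ((s - 1) * ((r : ℝ) - (j : ℝ))) := by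
        rw [← Real.rpow_natCast (q ^ (s - 1)) (r - j), ← Real.rpow_mul hq.le, hc2]
      have hW : Wq q s m (j + 1) k * q ^ ((s - 1) * ((r : ℝ) - (j : ℝ))) *
            q ^ (s * ((n : ℝ) - (k : ℝ)) - (s - 1) * (r : ℝ))
          = q ^ (s * ((n : ℝ) + 1) - (s - 1) * ((m : ℝ) + (j : ℝ) + 1)) * Wq q s m j k := by
        simp only [Wq]
        rw [← Real.rpow_add hq, ← Real.rpow_add hq, ← Real.rpow_add hq]
        congr 1
        push_cast
        ring
      have hP : Pq q s m k (r - j) = Pq q s m k (r - (j + 1)) *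
          qBracket q (((k : ℝ) - (m : ℝ)) * (s - 1) + (k : ℝ) + 1 +
            ((r - (j + 1) : ℕ) : ℝ) * (s - 1)) := by
        rw [(by omega : r - j = (r - (j + 1)) + 1)]
        simp only [Pq]
        rw [Finset.prod_range_succ]
      have hbr : qBracket q (s * ((n : ℝ) + 1) - (s - 1) * ((m : ℝ) + (j : ℝ) + 2))
          = qBracket q (s * ((n : ℝ) - (k : ℝ)) - (s - 1) * (r : ℝ))
            + q ^ (s * ((n : ℝ) - (k : ℝ)) - (s - 1) * (r : ℝ)) *
              qBracket q (((k : ℝ) - (m : ℝ)) * (s - 1) + (k : ℝ) + 1 +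
                ((r - (j + 1) : ℕ) : ℝ) * (s - 1)) := by
        rw [← qBracket_add hq hq1]
        congr 1
        rw [Nat.cast_sub (by omega : j + 1 ≤ r)]
        push_cast
        ring
      rw [hnk, hQ, hP, hbr]
      linear_combination (genStirling s q k m * qBinom (q ^ (s - 1)) r j *
        genStirling s q (n - k) r *
        (Pq q s m k (r - (j + 1)) *
          qBracket q (((k : ℝ) - (m : ℝ)) * (s - 1) + (k : ℝ) + 1 +
            ((r - (j + 1) : ℕ) : ℝ) * (s - 1)))) * hW

end Main

section Assemble

lemma inner_zero (q s : ℝ) (hq : 0 < q) (hq1 : q ≠ 1) (n m k : ℕ) (hk : k ≤ n) :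
    ∑ r ∈ Finset.range ((n + 1) - k + 1), Tm q s m 0 (n + 1) k r
    = qBracket q (s * ((n : ℝ) + 1) - (s - 1) * ((m : ℝ) + 1)) *
        ∑ r ∈ Finset.range (n - k + 1), Tm q s m 0 n k r := by
  rw [sum_decomp q s n m 0 k hk, Finset.mul_sum]
  exact Finset.sum_congr rfl (fun r _ => point_zero q s hq hq1 n m k r hk)

lemma inner_succ (q s : ℝ) (hq : 0 < q) (hq1 : q ≠ 1) (n m j k : ℕ) (hk : k ≤ n) :
    ∑ r ∈ Finset.range ((n + 1) - k + 1), Tm q s m (j + 1) (n + 1) k r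
    = q ^ (s * ((n : ℝ) + 1) - (s - 1) * ((m : ℝ) + (j : ℝ) + 1)) *
        (∑ r ∈ Finset.range (n - k + 1), Tm q s m j n k r)
      + qBracket q (s * ((n : ℝ) + 1) - (s - 1) * ((m : ℝ) + (j : ℝ) + 2)) *
        (∑ r ∈ Finset.range (n - k + 1), Tm q s m (j + 1) n k r) := by
  rw [sum_decomp q s n m (j + 1) k hk, Finset.mul_sum, Finset.mul_sum,
    ← Finset.sum_add_distrib]
  exact Finset.sum_congr rfl (fun r _ => point_succ q s hq hq1 n m j k r hk)

lemma genStirling_zero_zero (s q : ℝ) : genStirling s q 0 0 = 1 := by rw [genStirling]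

lemma main_aux (q s : ℝ) (hq : 0 < q) (hq1 : q ≠ 1) :
    ∀ n m j : ℕ, genStirling s q (n + 1) (m + j + 1)
      = ∑ k ∈ Finset.Icc m n, ∑ r ∈ Finset.range (n - k + 1), Tm q s m j n k r := by
  intro n
  induction n with
  | zero =>
    intro m j
    match m with
    | 0 =>
      rw [Finset.Icc_self, Finset.sum_singleton]
      rw [(by omega : 0 - 0 + 1 = 1), Finset.sum_range_one]
      match j with
      | 0 =>
        simp only [Tm, Wq, Nat.zero_add]
        rw [genStirling_succ s q 0 0, genStirling_zero_zero,
          genStirling_eq_zero s q 0 1 (by omega), Pq_zero, qBinom_zero]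
        rw [(by push_cast; ring :
          s * ((0 : ℕ) : ℝ) - (s - 1) * ((0 : ℕ) : ℝ) = 0), Real.rpow_zero]
        rw [(by push_cast; ring : (((0 : ℕ) : ℝ) + 1) *
          (((0 : ℕ) : ℝ) + (((0 : ℕ) : ℝ) - ((0 : ℕ) : ℝ)) * (s - 1)) + ((0 : ℕ) : ℝ) = 0),
          Real.rpow_zero]
        ring
      | j' + 1 =>
        rw [genStirling_eq_zero s q 1 (0 + (j' + 1) + 1) (by omega)]
        simp only [Tm]
        rw [qBinom_eq_zero (q ^ (s - 1)) (show 0 < j' + 1 by omega)]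
        ring
    | m' + 1 =>
      rw [Finset.Icc_eq_empty (by omega), Finset.sum_empty,
        genStirling_eq_zero s q 1 (m' + 1 + j + 1) (by omega)]
  | succ n ih =>
    intro m j
    by_cases hm : m ≤ n + 1
    · rw [Finset.sum_Icc_succ_top hm]
      have hb : ∑ r ∈ Finset.range ((n + 1) - (n + 1) + 1), Tm q s m j (n + 1) (n + 1) r
          = Tm q s m j (n + 1) (n + 1) 0 := by
        rw [(by omega : (n + 1) - (n + 1) + 1 = 1), Finset.sum_range_one]
      rw [hb]
      match j with
      | 0 =>
        have hin : ∀ k ∈ Finset.Icc m n,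
            ∑ r ∈ Finset.range ((n + 1) - k + 1), Tm q s m 0 (n + 1) k r
            = qBracket q (s * ((n : ℝ) + 1) - (s - 1) * ((m : ℝ) + 1)) *
                ∑ r ∈ Finset.range (n - k + 1), Tm q s m 0 n k r := by
          intro k hk
          exact inner_zero q s hq hq1 n m k (Finset.mem_Icc.mp hk).2
        rw [Finset.sum_congr rfl hin, ← Finset.mul_sum, ← ih m 0]
        have hbd : Tm q s m 0 (n + 1) (n + 1) 0
            = q ^ (s * ((n : ℝ) + 1) - (s - 1) * (m : ℝ)) * genStirling s q (n + 1) m := by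
          simp only [Tm, Wq]
          rw [Nat.sub_self, genStirling_zero_zero, Pq_zero, qBinom_zero]
          rw [(by push_cast; ring : (((0 : ℕ) : ℝ) + 1) *
            (((n + 1 : ℕ) : ℝ) + (((n + 1 : ℕ) : ℝ) - (m : ℝ)) * (s - 1)) + ((0 : ℕ) : ℝ)
            = s * ((n : ℝ) + 1) - (s - 1) * (m : ℝ))]
          ring
        rw [hbd]
        rw [show m + 0 + 1 = m + 1 from rfl, genStirling_succ s q (n + 1) m]
        rw [(by push_cast; ring : s * ((n + 1 : ℕ) : ℝ) - (s - 1) * ((m : ℕ) : ℝ)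
          = s * ((n : ℝ) + 1) - (s - 1) * (m : ℝ))]
        rw [(by push_cast; ring : s * ((n + 1 : ℕ) : ℝ) - (s - 1) * (((m : ℕ) : ℝ) + 1)
          = s * ((n : ℝ) + 1) - (s - 1) * ((m : ℝ) + 1))]
        ring
      | j' + 1 =>
        have hin : ∀ k ∈ Finset.Icc m n,
            ∑ r ∈ Finset.range ((n + 1) - k + 1), Tm q s m (j' + 1) (n + 1) k r
            = q ^ (s * ((n : ℝ) + 1) - (s - 1) * ((m : ℝ) + (j' : ℝ) + 1)) *
                (∑ r ∈ Finset.range (n - k + 1), Tm q s m j' n k r)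
              + qBracket q (s * ((n : ℝ) + 1) - (s - 1) * ((m : ℝ) + (j' : ℝ) + 2)) *
                (∑ r ∈ Finset.range (n - k + 1), Tm q s m (j' + 1) n k r) := by
          intro k hk
          exact inner_succ q s hq hq1 n m j' k (Finset.mem_Icc.mp hk).2
        rw [Finset.sum_congr rfl hin, Finset.sum_add_distrib, ← Finset.mul_sum,
          ← Finset.mul_sum, ← ih m j', ← ih m (j' + 1)]
        have hbd : Tm q s m (j' + 1) (n + 1) (n + 1) 0 = 0 := by
          simp only [Tm]
          rw [qBinom_eq_zero (q ^ (s - 1)) (show 0 < j' + 1 by omega)]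
          ring
        rw [hbd, add_zero]
        rw [show m + (j' + 1) + 1 = (m + j' + 1) + 1 from rfl,
          genStirling_succ s q (n + 1) (m + j' + 1)]
        rw [(by push_cast; ring : s * ((n + 1 : ℕ) : ℝ) - (s - 1) * ((m + j' + 1 : ℕ) : ℝ)
          = s * ((n : ℝ) + 1) - (s - 1) * ((m : ℝ) + (j' : ℝ) + 1))]
        rw [(by push_cast; try ring :
          s * ((n + 1 : ℕ) : ℝ) - (s - 1) * (((m + j' + 1 : ℕ) : ℝ) + 1)
          = s * ((n : ℝ) + 1) - (s - 1) * ((m : ℝ) + (j' : ℝ) + 2))]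
    · rw [Finset.Icc_eq_empty (by omega), Finset.sum_empty,
        genStirling_eq_zero s q (n + 1 + 1) (m + j + 1) (by omega)]

end Assemble

/-- Convolution identity for generalized `q`-Stirling numbers, second form
(Theorem on `S_{s,q}[n+1, m+j+1]`). -/
theorem stirling_shift_convolution_second (q s : ℝ) (hq : 0 < q) (hq1 : q ≠ 1) (n m j : ℕ) :
    genStirling s q (n + 1) (m + j + 1)
    = ∑ k ∈ Finset.Icc m n, ∑ r ∈ Finset.range (n - k + 1),
        genStirling s q k m *
          q ^ (((j : ℝ) + 1) * ((k : ℝ) + ((k : ℝ) - (m : ℝ)) * (s - 1)) + (j : ℝ)) *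
          qBinom (q ^ (s - 1)) r j * genStirling s q (n - k) r *
          ∏ t ∈ Finset.range (r - j),
            qBracket q (((k : ℝ) - (m : ℝ)) * (s - 1) + (k : ℝ) + 1 + (t : ℝ) * (s - 1)) := by
  rw [main_aux q s hq hq1 n m j]
  exact Finset.sum_congr rfl fun k _ => Finset.sum_congr rfl fun r _ => by
    simp only [Tm, Wq, Pq]
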